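/- For every n ≥ 1, the number of regular elements of the semigroup ORCT_n of order-preserving or order-reversing full contractions of the chain [n] is |Reg(ORCT_n)| = (n(n−1)(2n−1) + 6n)/3 − n. -/

import Mathlib

set_option maxHeartbeats 1000000

/-- `α` is a (full) contraction of the chain `{1, …, n}` (modelled as `Fin n`):
`|xα - yα| ≤ |x - y|` for all `x, y`. -/
def IsContraction {n : ℕ} (α : Function.End (Fin n)) : Prop :=
  ∀ x y : Fin n, |((α x : ℕ) : ℤ) - ((α y : ℕ) : ℤ)| ≤ |((x : ℕ) : ℤ) - ((y : ℕ) : ℤ)|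

/-- `OCT n`: the order-preserving full contractions of the chain. -/
def OCT (n : ℕ) : Set (Function.End (Fin n)) :=
  {α | IsContraction α ∧ Monotone α}

/-- `ORCT n`: the order-preserving or order-reversing full contractions of the chain. -/
def ORCT (n : ℕ) : Set (Function.End (Fin n)) :=
  {α | IsContraction α ∧ (Monotone α ∨ Antitone α)}

/-- The regular elements of `OCT n`. -/
def RegOCT (n : ℕ) : Set (Function.End (Fin n)) :=
  {α | α ∈ OCT n ∧ ∃ β ∈ OCT n, α * β * α = α}

/-- The regular elements of `ORCT n`. -/
def RegORCT (n : ℕ) : Set (Function.End (Fin n)) :=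
  {α | α ∈ ORCT n ∧ ∃ β ∈ ORCT n, α * β * α = α}

/-- `|Im α|`, the rank of a transformation. -/
noncomputable def imCard {n : ℕ} (α : Function.End (Fin n)) : ℕ :=
  (Set.range α).ncard

namespace Aux


def mkM (n : ℕ) (lo hi t : ℤ) : Function.End (Fin n) :=
  fun x => ⟨min (n-1) (max lo (min hi (((x:ℕ):ℤ) + t))).toNat, by have := x.2; omega⟩

def mkA (n : ℕ) (lo hi t : ℤ) : Function.End (Fin n) :=
  fun x => ⟨min (n-1) (max lo (min hi (t - ((x:ℕ):ℤ)))).toNat, by have := x.2; omega⟩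

lemma mkM_val {n : ℕ} {lo hi : ℤ} (t : ℤ) (h1 : 0 ≤ lo) (h2 : lo ≤ hi) (h3 : hi ≤ (n:ℤ) - 1)
    (x : Fin n) :
    ((mkM n lo hi t x : ℕ) : ℤ) = max lo (min hi (((x:ℕ):ℤ) + t)) := by
  have := x.2; simp only [mkM]; omega

lemma mkA_val {n : ℕ} {lo hi : ℤ} (t : ℤ) (h1 : 0 ≤ lo) (h2 : lo ≤ hi) (h3 : hi ≤ (n:ℤ) - 1)
    (x : Fin n) :
    ((mkA n lo hi t x : ℕ) : ℤ) = max lo (min hi (t - ((x:ℕ):ℤ))) := by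
  have := x.2; simp only [mkA]; omega

lemma fin_le_iff {n : ℕ} {x y : Fin n} : x ≤ y ↔ (x:ℕ) ≤ (y:ℕ) := Iff.rfl

lemma fin_eq_of_cast {n : ℕ} {a b : Fin n} (h : ((a:ℕ):ℤ) = ((b:ℕ):ℤ)) : a = b :=
  Fin.ext (by exact_mod_cast h)

lemma mkM_mem {n : ℕ} {lo hi : ℤ} (t : ℤ) (h1 : 0 ≤ lo) (h2 : lo ≤ hi) (h3 : hi ≤ (n:ℤ) - 1) :
    mkM n lo hi t ∈ ORCT n := by
  refine ⟨fun x y => ?_, Or.inl fun x y hxy => ?_⟩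
  · rw [mkM_val t h1 h2 h3, mkM_val t h1 h2 h3]
    rcases abs_cases (max lo (min hi (((x:ℕ):ℤ) + t)) - max lo (min hi (((y:ℕ):ℤ) + t))) with ⟨h,_⟩|⟨h,_⟩ <;>
      rcases abs_cases (((x:ℕ):ℤ) - ((y:ℕ):ℤ)) with ⟨h',_⟩|⟨h',_⟩ <;> omega
  · rw [fin_le_iff] at hxy ⊢
    have hx := mkM_val t h1 h2 h3 x
    have hy := mkM_val t h1 h2 h3 y
    omega

lemma mkA_mem {n : ℕ} {lo hi : ℤ} (t : ℤ) (h1 : 0 ≤ lo) (h2 : lo ≤ hi) (h3 : hi ≤ (n:ℤ) - 1) :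
    mkA n lo hi t ∈ ORCT n := by
  refine ⟨fun x y => ?_, Or.inr fun x y hxy => ?_⟩
  · rw [mkA_val t h1 h2 h3, mkA_val t h1 h2 h3]
    rcases abs_cases (max lo (min hi (t - ((x:ℕ):ℤ))) - max lo (min hi (t - ((y:ℕ):ℤ)))) with ⟨h,_⟩|⟨h,_⟩ <;>
      rcases abs_cases (((x:ℕ):ℤ) - ((y:ℕ):ℤ)) with ⟨h',_⟩|⟨h',_⟩ <;> omega
  · rw [fin_le_iff] at hxy
    rw [fin_le_iff]
    have hx := mkA_val t h1 h2 h3 x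
    have hy := mkA_val t h1 h2 h3 y
    omega

lemma mkM_reg {n : ℕ} {lo hi t : ℤ} (h1 : 0 ≤ lo) (h2 : lo ≤ hi) (h3 : hi ≤ (n:ℤ) - 1)
    (h4 : hi - ((n:ℤ) - 1) ≤ t) (h5 : t ≤ lo) :
    mkM n lo hi t ∈ RegORCT n := by
  refine ⟨mkM_mem t h1 h2 h3, mkM n (lo - t) (hi - t) (-t), mkM_mem _ (by omega) (by omega) (by omega), ?_⟩
  funext x
  apply fin_eq_of_cast
  show ((mkM n lo hi t (mkM n (lo-t) (hi-t) (-t) (mkM n lo hi t x)) : ℕ) : ℤ) = _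
  rw [mkM_val t h1 h2 h3, mkM_val (-t) (by omega) (by omega) (by omega),
    mkM_val t h1 h2 h3]
  omega

lemma mkA_reg {n : ℕ} {lo hi t : ℤ} (h1 : 0 ≤ lo) (h2 : lo ≤ hi) (h3 : hi ≤ (n:ℤ) - 1)
    (h4 : hi ≤ t) (h5 : t ≤ lo + ((n:ℤ) - 1)) :
    mkA n lo hi t ∈ RegORCT n := by
  refine ⟨mkA_mem t h1 h2 h3, mkA n (t - hi) (t - lo) t, mkA_mem _ (by omega) (by omega) (by omega), ?_⟩
  funext x
  apply fin_eq_of_cast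
  show ((mkA n lo hi t (mkA n (t-hi) (t-lo) t (mkA n lo hi t x)) : ℕ) : ℤ) = _
  rw [mkA_val t h1 h2 h3, mkA_val t (by omega) (by omega) (by omega),
    mkA_val t h1 h2 h3]
  omega

lemma const_reg {n : ℕ} (v : Fin n) :
    (fun _ => v : Function.End (Fin n)) ∈ RegORCT n := by
  refine ⟨⟨fun x y => by simp, Or.inl fun x y _ => le_refl _⟩,
    (fun _ => v : Function.End (Fin n)), ⟨fun x y => by simp, Or.inl fun x y _ => le_refl _⟩, rfl⟩

lemma ivt {n : ℕ} (hn : 0 < n) {α : Function.End (Fin n)} (hc : IsContraction α)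
    (hm : Monotone α) {v : ℕ} (hlo : ((α ⟨0, hn⟩ : Fin n) : ℕ) ≤ v)
    (hhi : v ≤ ((α ⟨n-1, by omega⟩ : Fin n) : ℕ)) :
    ∃ x : Fin n, ((α x : Fin n) : ℕ) = v := by
  classical
  have hne : (Finset.filter (fun x : Fin n => v ≤ ((α x : Fin n) : ℕ)) Finset.univ).Nonempty :=
    ⟨⟨n-1, by omega⟩, by simp [hhi]⟩
  obtain ⟨x₀, hx₀mem, hmin⟩ := Finset.exists_min_image _ id hne
  rw [Finset.mem_filter] at hx₀mem
  have hx₀ : v ≤ ((α x₀ : Fin n) : ℕ) := hx₀mem.2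
  by_cases h0 : (x₀ : ℕ) = 0
  · refine ⟨x₀, ?_⟩
    have hx : x₀ = ⟨0, hn⟩ := Fin.ext h0
    rw [hx] at hx₀; rw [hx]; omega
  · have hlt : (x₀ : ℕ) < n := x₀.2
    have hpred : ¬ v ≤ ((α ⟨(x₀:ℕ)-1, by omega⟩ : Fin n) : ℕ) := by
      intro hv
      have hmem : (⟨(x₀:ℕ)-1, by omega⟩ : Fin n) ∈
          Finset.filter (fun x : Fin n => v ≤ ((α x : Fin n) : ℕ)) Finset.univ := by
        rw [Finset.mem_filter]; exact ⟨Finset.mem_univ _, hv⟩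
      have h2 := hmin _ hmem
      simp only [id] at h2
      rw [fin_le_iff] at h2
      simp only [Fin.val_mk] at h2
      omega
    have habs := hc x₀ ⟨(x₀:ℕ)-1, by omega⟩
    refine ⟨x₀, ?_⟩
    simp only [Fin.val_mk] at habs
    rcases abs_cases ((((α x₀ : Fin n):ℕ):ℤ) - (((α ⟨(x₀:ℕ)-1, by omega⟩ : Fin n):ℕ):ℤ)) with ⟨h,_⟩|⟨h,_⟩ <;>
      rcases abs_cases (((x₀:ℕ):ℤ) - (((x₀:ℕ) - 1 : ℕ):ℤ)) with ⟨h2,_⟩|⟨h2,_⟩ <;> omega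

lemma mono_char {n : ℕ} (hn : 0 < n) {α β : Function.End (Fin n)}
    (hc : IsContraction α) (hm : Monotone α) (hβc : IsContraction β)
    (hfix : ∀ x, α (β (α x)) = α x)
    (hnc : ∀ v : Fin n, α ≠ fun _ => v) :
    ∃ d a s : ℤ, (1 ≤ d ∧ 0 ≤ a ∧ a + d ≤ (n:ℤ)-1 ∧ 0 ≤ s ∧ s + d ≤ (n:ℤ)-1) ∧
      α = mkM n a (a+d) (a-s) := by
  set lo : ℕ := ((α ⟨0, hn⟩ : Fin n) : ℕ) with hlo_def
  set hi : ℕ := ((α ⟨n-1, by omega⟩ : Fin n) : ℕ) with hhi_def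
  have hbnd : ∀ x : Fin n, lo ≤ ((α x : Fin n) : ℕ) ∧ ((α x : Fin n) : ℕ) ≤ hi := by
    intro x
    constructor
    · exact hm (show (⟨0, hn⟩ : Fin n) ≤ x from fin_le_iff.mpr (Nat.zero_le _))
    · exact hm (show x ≤ (⟨n-1, by omega⟩ : Fin n) from fin_le_iff.mpr (by have := x.2; simp; omega))
  have hlohi : lo < hi := by
    rcases Nat.lt_or_ge lo hi with h | h
    · exact h
    · exfalso
      apply hnc (α ⟨0, hn⟩)
      funext x
      have hb := hbnd x
      exact Fin.ext (by omega)
  have hhin : hi < n := (α _).2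
  have hfixval : ∀ v : ℕ, lo ≤ v → (h2 : v ≤ hi) → ((α (β ⟨v, by omega⟩) : Fin n) : ℕ) = v := by
    intro v h1 h2
    obtain ⟨x, hx⟩ := ivt hn hc hm (v := v) (by omega) (by omega)
    have hax : α x = ⟨v, by omega⟩ := Fin.ext hx
    have := hfix x
    rw [hax] at this
    rw [this]
  set c : ℕ := ((β ⟨lo, by omega⟩ : Fin n) : ℕ) with hc_def
  have hpin : ∀ i : ℕ, ∀ _hile : i ≤ hi - lo, ((β ⟨lo + i, by omega⟩ : Fin n) : ℕ) = c + i := by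
    intro i
    induction i with
    | zero => intro _; simp only [Nat.add_zero]; rfl
    | succ i ih =>
      intro hile
      show ((β ⟨lo + i + 1, by omega⟩ : Fin n) : ℕ) = c + i + 1
      have ihv := ih (by omega)
      have hfi := hfixval (lo + i) (by omega) (by omega)
      have hfi1 := hfixval (lo + i + 1) (by omega) (by omega)
      have hstep : ¬ ((β ⟨lo + i + 1, by omega⟩ : Fin n) : ℕ) ≤ ((β ⟨lo + i, by omega⟩ : Fin n) : ℕ) := by
        intro hle
        have := hm (show (β ⟨lo + i + 1, by omega⟩ : Fin n) ≤ β ⟨lo + i, by omega⟩ from fin_le_iff.mpr hle)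
        rw [fin_le_iff] at this
        omega
      have habs := hβc ⟨lo + i + 1, by omega⟩ ⟨lo + i, by omega⟩
      simp only [Fin.val_mk] at habs
      rcases abs_cases ((((β ⟨lo + i + 1, by omega⟩ : Fin n) : ℕ):ℤ) - (((β ⟨lo + i, by omega⟩ : Fin n) : ℕ):ℤ)) with ⟨h,_⟩|⟨h,_⟩ <;>
        rcases abs_cases (((lo + i + 1 : ℕ):ℤ) - ((lo + i : ℕ):ℤ)) with ⟨h2,_⟩|⟨h2,_⟩ <;> omega
  have hcd : c + (hi - lo) < n := by
    have := hpin (hi - lo) le_rfl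
    have h2 := (β ⟨lo + (hi - lo), by omega⟩).2
    omega
  have hmid : ∀ x : Fin n, c ≤ (x:ℕ) → (x:ℕ) ≤ c + (hi - lo) → ((α x : Fin n) : ℕ) = lo + ((x:ℕ) - c) := by
    intro x h1 h2
    have hp := hpin ((x:ℕ) - c) (by omega)
    have hx : x = β ⟨lo + ((x:ℕ) - c), by omega⟩ := by apply Fin.ext; omega
    have hax : α x = α (β ⟨lo + ((x:ℕ) - c), by omega⟩) := congrArg α hx
    rw [hax]
    exact hfixval (lo + ((x:ℕ) - c)) (by omega) (by omega)
  have hlow : ∀ x : Fin n, (x:ℕ) < c → ((α x : Fin n) : ℕ) = lo := by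
    intro x h1
    have h2 := hm (show x ≤ ⟨c, by omega⟩ from fin_le_iff.mpr (by simp only [Fin.val_mk]; omega))
    rw [fin_le_iff] at h2
    have h3 := hmid ⟨c, by omega⟩ (by simp only [Fin.val_mk]; omega) (by simp only [Fin.val_mk]; omega)
    have hb := hbnd x
    simp only [Fin.val_mk] at h3
    omega
  have hhigh : ∀ x : Fin n, c + (hi - lo) < (x:ℕ) → ((α x : Fin n) : ℕ) = hi := by
    intro x h1
    have h2 := hm (show (⟨c + (hi - lo), by omega⟩ : Fin n) ≤ x from fin_le_iff.mpr (by simp only [Fin.val_mk]; omega))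
    rw [fin_le_iff] at h2
    have h3 := hmid ⟨c + (hi - lo), by omega⟩ (by simp only [Fin.val_mk]; omega) (by simp only [Fin.val_mk]; omega)
    have hb := hbnd x
    simp only [Fin.val_mk] at h3
    omega
  refine ⟨(hi:ℤ) - lo, lo, c, ⟨by omega, by omega, by omega, by omega, by omega⟩, ?_⟩
  funext x
  apply fin_eq_of_cast
  rw [mkM_val _ (by omega) (by omega) (by omega)]
  rcases Nat.lt_or_ge (x:ℕ) c with h | h
  · have := hlow x h; omega
  · rcases Nat.lt_or_ge (c + (hi - lo)) (x:ℕ) with h' | h'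
    · have := hhigh x h'; omega
    · have := hmid x h h'; omega

def rv (n : ℕ) : Function.End (Fin n) := fun x => ⟨n-1-(x:ℕ), by have := x.2; omega⟩

lemma rv_val {n : ℕ} (x : Fin n) : ((rv n x : Fin n) : ℕ) = n - 1 - (x:ℕ) := rfl

lemma rv_rv {n : ℕ} (x : Fin n) : rv n (rv n x) = x := by
  apply Fin.ext
  rw [rv_val, rv_val]
  have := x.2
  omega

lemma anti_char {n : ℕ} (hn : 0 < n) {α β : Function.End (Fin n)}
    (hc : IsContraction α) (hm : Antitone α) (hβc : IsContraction β)
    (hfix : ∀ x, α (β (α x)) = α x)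
    (hnc : ∀ v : Fin n, α ≠ fun _ => v) :
    ∃ d a s : ℤ, (1 ≤ d ∧ 0 ≤ a ∧ a + d ≤ (n:ℤ)-1 ∧ 0 ≤ s ∧ s + d ≤ (n:ℤ)-1) ∧
      α = mkA n a (a+d) (a+d+s) := by
  set α' : Function.End (Fin n) := fun x => α (rv n x) with hα'
  set β' : Function.End (Fin n) := fun x => rv n (β x) with hβ'
  have hrvc : IsContraction (rv n) := by
    intro x y
    show |(((rv n x : Fin n):ℕ):ℤ) - (((rv n y : Fin n):ℕ):ℤ)| ≤ _
    rw [rv_val, rv_val]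
    have := x.2; have := y.2
    rcases abs_cases ((((n-1-(x:ℕ) : ℕ)):ℤ) - (((n-1-(y:ℕ) : ℕ)):ℤ)) with ⟨h,_⟩|⟨h,_⟩ <;>
      rcases abs_cases (((x:ℕ):ℤ) - ((y:ℕ):ℤ)) with ⟨h2,_⟩|⟨h2,_⟩ <;> omega
  have hc' : IsContraction α' := fun x y => le_trans (hc (rv n x) (rv n y)) (hrvc x y)
  have hm' : Monotone α' := by
    intro x y hxy
    apply hm
    rw [fin_le_iff] at hxy ⊢
    rw [rv_val, rv_val]
    omega
  have hβc' : IsContraction β' := fun x y => le_trans (hrvc (β x) (β y)) (hβc x y)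
  have hfix' : ∀ x, α' (β' (α' x)) = α' x := by
    intro x
    show α (rv n (rv n (β (α (rv n x))))) = α (rv n x)
    rw [rv_rv]
    exact hfix (rv n x)
  have hnc' : ∀ v : Fin n, α' ≠ fun _ => v := by
    intro v hv
    apply hnc v
    funext x
    have h1 : α' (rv n x) = v := congrFun hv (rv n x)
    show α x = v
    rw [← h1]
    show α x = α (rv n (rv n x))
    rw [rv_rv]
  obtain ⟨d, a, s, ⟨hd, ha, had, hs, hsd⟩, heq⟩ := mono_char hn hc' hm' hβc' hfix' hnc'
  refine ⟨d, a, (n:ℤ)-1-d-s, ⟨hd, ha, had, by omega, by omega⟩, ?_⟩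
  funext x
  apply fin_eq_of_cast
  have h1 : α x = α' (rv n x) := by
    show α x = α (rv n (rv n x))
    rw [rv_rv]
  rw [h1, heq, mkM_val _ (by omega) (by omega) (by omega),
    mkA_val _ (by omega) (by omega) (by omega)]
  have h2 : (((rv n x : Fin n):ℕ):ℤ) = (n:ℤ) - 1 - ((x:ℕ):ℤ) := by
    rw [rv_val]; have := x.2; omega
  rw [h2]
  have := x.2
  omega



def CS (n : ℕ) : Set (Function.End (Fin n)) :=
  Set.range (fun v : Fin n => (fun _ => v : Function.End (Fin n)))

def pM (n : ℕ) (p : ℤ × ℤ × ℤ) : Function.End (Fin n) := mkM n p.2.1 (p.2.1 + p.1) (p.2.1 - p.2.2)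
def pA (n : ℕ) (p : ℤ × ℤ × ℤ) : Function.End (Fin n) := mkA n p.2.1 (p.2.1 + p.1) (p.2.1 + p.1 + p.2.2)

noncomputable def TS (n : ℕ) : Finset (ℤ × ℤ × ℤ) :=
  (Finset.Icc 1 ((n:ℤ)-1)).biUnion fun d =>
    (Finset.Icc 0 ((n:ℤ)-1-d) ×ˢ Finset.Icc 0 ((n:ℤ)-1-d)).map
      ⟨fun p => (d, p.1, p.2), fun p q h => by
        simp only [Prod.mk.injEq] at h; exact Prod.ext h.2.1 h.2.2⟩

lemma mem_TS {n : ℕ} {p : ℤ × ℤ × ℤ} : p ∈ TS n ↔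
    1 ≤ p.1 ∧ 0 ≤ p.2.1 ∧ p.2.1 + p.1 ≤ (n:ℤ)-1 ∧ 0 ≤ p.2.2 ∧ p.2.2 + p.1 ≤ (n:ℤ)-1 := by
  obtain ⟨d, a, s⟩ := p
  simp only [TS, Finset.mem_biUnion, Finset.mem_map, Finset.mem_product, Finset.mem_Icc,
    Function.Embedding.coeFn_mk, Prod.mk.injEq]
  constructor
  · rintro ⟨d', hd', ⟨a', s'⟩, ⟨ha', hs'⟩, rfl, rfl, rfl⟩
    omega
  · rintro ⟨h1, h2, h3, h4, h5⟩
    exact ⟨d, by omega, ⟨a, s⟩, ⟨by omega, by omega⟩, rfl⟩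

lemma card_TS {n : ℕ} : (TS n).card = ∑ j ∈ Finset.range n, j^2 := by
  rw [TS, Finset.card_biUnion]
  · have h1 : ∀ d ∈ Finset.Icc (1:ℤ) ((n:ℤ)-1),
        ((Finset.Icc (0:ℤ) ((n:ℤ)-1-d) ×ˢ Finset.Icc (0:ℤ) ((n:ℤ)-1-d)).map
          ⟨fun p => (d, p.1, p.2), fun p q h => by
            simp only [Prod.mk.injEq] at h; exact Prod.ext h.2.1 h.2.2⟩).card
        = ((n:ℤ) - d).toNat ^ 2 := by
      intro d hd
      rw [Finset.card_map, Finset.card_product, Int.card_Icc]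
      simp only [sq]
      congr 1 <;> omega
    rw [Finset.sum_congr rfl h1]
    rw [show ∑ j ∈ Finset.range n, j^2 = ∑ j ∈ Finset.Icc 1 (n-1), j^2 from ?_]
    · refine Finset.sum_nbij' (fun d => ((n:ℤ) - d).toNat) (fun j => (n:ℤ) - j) ?_ ?_ ?_ ?_ ?_
      · intro d hd; rw [Finset.mem_Icc] at hd ⊢; omega
      · intro j hj; rw [Finset.mem_Icc] at hj ⊢; omega
      · intro d hd; rw [Finset.mem_Icc] at hd; omega
      · intro j hj; rw [Finset.mem_Icc] at hj; omega
      · intro d hd; rfl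
    · symm
      apply Finset.sum_subset
      · intro j hj; rw [Finset.mem_Icc] at hj; rw [Finset.mem_range]; omega
      · intro j hj hj'; rw [Finset.mem_range] at hj; rw [Finset.mem_Icc] at hj'
        have : j = 0 := by omega
        simp [this]
  · intro d hd d' hd' hne
    apply Finset.disjoint_left.mpr
    intro p hp hp'
    simp only [Finset.mem_map, Function.Embedding.coeFn_mk] at hp hp'
    obtain ⟨q, _, rfl⟩ := hp
    obtain ⟨q', _, h⟩ := hp'
    exact hne (by rw [Prod.ext_iff] at h; exact h.1.symm)

lemma key_valM {n : ℕ} {p q : ℤ × ℤ × ℤ} (hp : p ∈ TS n) (hq : q ∈ TS n)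
    (h : pM n p = pM n q) (x : Fin n) :
    max p.2.1 (min (p.2.1 + p.1) (((x:ℕ):ℤ) + (p.2.1 - p.2.2)))
      = max q.2.1 (min (q.2.1 + q.1) (((x:ℕ):ℤ) + (q.2.1 - q.2.2))) := by
  rw [mem_TS] at hp hq
  have h2 : ((pM n p x : ℕ):ℤ) = ((pM n q x :ℕ):ℤ) := by rw [h]
  rw [pM, pM, mkM_val _ (by omega) (by omega) (by omega),
    mkM_val _ (by omega) (by omega) (by omega)] at h2
  exact h2

lemma key_valA {n : ℕ} {p q : ℤ × ℤ × ℤ} (hp : p ∈ TS n) (hq : q ∈ TS n)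
    (h : pA n p = pA n q) (x : Fin n) :
    max p.2.1 (min (p.2.1 + p.1) ((p.2.1 + p.1 + p.2.2) - ((x:ℕ):ℤ)))
      = max q.2.1 (min (q.2.1 + q.1) ((q.2.1 + q.1 + q.2.2) - ((x:ℕ):ℤ))) := by
  rw [mem_TS] at hp hq
  have h2 : ((pA n p x : ℕ):ℤ) = ((pA n q x :ℕ):ℤ) := by rw [h]
  rw [pA, pA, mkA_val _ (by omega) (by omega) (by omega),
    mkA_val _ (by omega) (by omega) (by omega)] at h2
  exact h2

lemma TS_n_pos {n : ℕ} {p : ℤ × ℤ × ℤ} (hp : p ∈ TS n) : 0 < n := by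
  rw [mem_TS] at hp; omega

lemma injM {n : ℕ} : Set.InjOn (pM n) ↑(TS n) := by
  intro p hp q hq h
  rw [Finset.mem_coe] at hp hq
  have hn : 0 < n := TS_n_pos hp
  have hpb := mem_TS.mp hp
  have hqb := mem_TS.mp hq
  have hn2 : 2 ≤ n := by omega
  have e1 := key_valM hp hq h ⟨0, hn⟩
  have e2 := key_valM hp hq h ⟨n-1, by omega⟩
  have e3 := key_valM hp hq h ⟨p.2.2.toNat, by omega⟩
  have e4 := key_valM hp hq h ⟨p.2.2.toNat + 1, by omega⟩
  simp only [Fin.val_mk] at e1 e2 e3 e4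
  obtain ⟨d, a, s⟩ := p
  obtain ⟨d', a', s'⟩ := q
  simp only [Prod.mk.injEq]
  simp only at e1 e2 e3 e4 hpb hqb
  refine ⟨by omega, by omega, by omega⟩

lemma injA {n : ℕ} : Set.InjOn (pA n) ↑(TS n) := by
  intro p hp q hq h
  rw [Finset.mem_coe] at hp hq
  have hn : 0 < n := TS_n_pos hp
  have hpb := mem_TS.mp hp
  have hqb := mem_TS.mp hq
  have hn2 : 2 ≤ n := by omega
  have e1 := key_valA hp hq h ⟨0, hn⟩
  have e2 := key_valA hp hq h ⟨n-1, by omega⟩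
  have e3 := key_valA hp hq h ⟨(p.1 + p.2.2).toNat, by omega⟩
  have e4 := key_valA hp hq h ⟨(p.1 + p.2.2).toNat - 1, by omega⟩
  simp only [Fin.val_mk] at e1 e2 e3 e4
  obtain ⟨d, a, s⟩ := p
  obtain ⟨d', a', s'⟩ := q
  simp only [Prod.mk.injEq]
  simp only at e1 e2 e3 e4 hpb hqb
  refine ⟨by omega, by omega, by omega⟩

lemma pM_ends {n : ℕ} {p : ℤ × ℤ × ℤ} (hp : p ∈ TS n) (hn : 0 < n) :
    ((pM n p ⟨0, hn⟩ : ℕ):ℤ) < ((pM n p ⟨n-1, by omega⟩ : ℕ):ℤ) := by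
  have hpb := mem_TS.mp hp
  rw [pM, mkM_val _ (by omega) (by omega) (by omega),
    mkM_val _ (by omega) (by omega) (by omega)]
  simp only [Fin.val_mk]
  omega

lemma pA_ends {n : ℕ} {p : ℤ × ℤ × ℤ} (hp : p ∈ TS n) (hn : 0 < n) :
    ((pA n p ⟨n-1, by omega⟩ : ℕ):ℤ) < ((pA n p ⟨0, hn⟩ : ℕ):ℤ) := by
  have hpb := mem_TS.mp hp
  rw [pA, mkA_val _ (by omega) (by omega) (by omega),
    mkA_val _ (by omega) (by omega) (by omega)]
  simp only [Fin.val_mk]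
  omega

lemma regset_eq {n : ℕ} (hn : 0 < n) :
    RegORCT n = CS n ∪ (pM n '' ↑(TS n) ∪ pA n '' ↑(TS n)) := by
  apply Set.Subset.antisymm
  · rintro α ⟨⟨hc, hmors⟩, β, ⟨hβc, _⟩, heq⟩
    have hfix : ∀ x, α (β (α x)) = α x := fun x => congrFun heq x
    by_cases hconst : ∃ v, α = fun _ => v
    · obtain ⟨v, rfl⟩ := hconst
      exact Or.inl ⟨v, rfl⟩
    · have hnc : ∀ v : Fin n, α ≠ (fun _ => v : Function.End (Fin n)) :=
        fun v hv => hconst ⟨v, hv⟩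
      rcases hmors with hm | hm
      · obtain ⟨d, a, s, hb, heq'⟩ := mono_char hn hc hm hβc hfix hnc
        refine Or.inr (Or.inl ⟨(d, a, s), ?_, heq'.symm⟩)
        rw [Finset.mem_coe, mem_TS]
        dsimp only
        omega
      · obtain ⟨d, a, s, hb, heq'⟩ := anti_char hn hc hm hβc hfix hnc
        refine Or.inr (Or.inr ⟨(d, a, s), ?_, heq'.symm⟩)
        rw [Finset.mem_coe, mem_TS]
        dsimp only
        omega
  · rintro α (⟨v, rfl⟩ | (⟨p, hp, rfl⟩ | ⟨p, hp, rfl⟩))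
    · exact const_reg v
    · have hpb := mem_TS.mp (Finset.mem_coe.mp hp)
      exact mkM_reg (by omega) (by omega) (by omega) (by omega) (by omega)
    · have hpb := mem_TS.mp (Finset.mem_coe.mp hp)
      exact mkA_reg (by omega) (by omega) (by omega) (by omega) (by omega)

lemma ncard_CS {n : ℕ} (hn : 0 < n) : (CS n).ncard = n := by
  have hinj : Function.Injective (fun v : Fin n => (fun _ => v : Function.End (Fin n))) := by
    intro u v h; exact congrFun h ⟨0, hn⟩
  have hCS : CS n = (fun v : Fin n => (fun _ => v : Function.End (Fin n))) '' Set.univ :=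
    Set.image_univ.symm
  rw [hCS]
  refine (Set.ncard_image_of_injective _ hinj).trans ?_
  rw [Set.ncard_univ,
    Nat.card_eq_fintype_card, Fintype.card_fin]

lemma six_sq' : ∀ m : ℕ, 6 * ∑ j ∈ Finset.range (m+1), j^2 = (m+1)*m*(2*m+1) := by
  intro m
  induction m with
  | zero => simp
  | succ m ih =>
    rw [Finset.sum_range_succ, Nat.mul_add, ih]
    ring

lemma six_sq : ∀ m : ℕ, 6 * ∑ j ∈ Finset.range m, j^2 = m*(m-1)*(2*m-1) := by
  intro m
  cases m with
  | zero => simp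
  | succ k =>
    rw [show (k+1) - 1 = k from rfl, show 2*(k+1)-1 = 2*k+1 by omega]
    exact six_sq' k

lemma final_count {n : ℕ} (hn : 0 < n) :
    (RegORCT n).ncard = n + 2 * ∑ j ∈ Finset.range n, j^2 := by
  haveI : Finite (Function.End (Fin n)) := inferInstanceAs (Finite (Fin n → Fin n))
  have hM : (pM n '' ↑(TS n)).ncard = ∑ j ∈ Finset.range n, j^2 := by
    rw [Set.ncard_image_of_injOn injM, Set.ncard_coe_finset, card_TS]
  have hA : (pA n '' ↑(TS n)).ncard = ∑ j ∈ Finset.range n, j^2 := by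
    rw [Set.ncard_image_of_injOn injA, Set.ncard_coe_finset, card_TS]
  have hd2 : Disjoint (pM n '' ↑(TS n)) (pA n '' ↑(TS n)) := by
    rw [Set.disjoint_left]
    rintro γ ⟨p, hp, rfl⟩ ⟨q, hq, hqe⟩
    have h1 := pM_ends (Finset.mem_coe.mp hp) hn
    have h2 := pA_ends (Finset.mem_coe.mp hq) hn
    exact absurd ((hqe ▸ h1).trans h2) (lt_irrefl _)
  have hd1 : Disjoint (CS n) (pM n '' ↑(TS n) ∪ pA n '' ↑(TS n)) := by
    rw [Set.disjoint_left]
    rintro γ ⟨v, rfl⟩ (⟨p, hp, hpe⟩ | ⟨q, hq, hqe⟩)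
    · have h1 := pM_ends (Finset.mem_coe.mp hp) hn
      rw [hpe] at h1
      exact absurd h1 (lt_irrefl _)
    · have h2 := pA_ends (Finset.mem_coe.mp hq) hn
      rw [hqe] at h2
      exact absurd h2 (lt_irrefl _)
  rw [regset_eq hn, Set.ncard_union_eq hd1 (Set.toFinite _) (Set.toFinite _),
    Set.ncard_union_eq hd2 (Set.toFinite _) (Set.toFinite _), ncard_CS hn, hM, hA]
  ring


end Aux

/-- `|Reg(ORCT_n)| = (n(n-1)(2n-1) + 6n)/3 - n`. -/
theorem stmt_2 (n : ℕ) (hn : 1 ≤ n) :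
    (RegORCT n).ncard = (n * (n - 1) * (2 * n - 1) + 6 * n) / 3 - n := by
  have h1 := Aux.final_count (n := n) hn
  have h2 := Aux.six_sq n
  set X := n * (n - 1) * (2 * n - 1) with hX
  set S := ∑ j ∈ Finset.range n, j^2 with hS
  omega
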